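/- arXiv:0710.5176 — 6 statements merged into one kernel-verified Lean document; each statement's English description precedes it below -/
import Mathlib

section
/- For real parts satisfying 0 < Re(w) < Re(z) < 1, the integral ∫₀^∞ λ^w |1-λ|^{-z} dλ/λ equals Γ(w)Γ(1-z)/Γ(1+w-z) + Γ(z-w)Γ(1-z)/Γ(1-w). -/
open Complex Set MeasureTheory

theorem key_pt (w z : ℂ) (x : ℝ) (hx : x ∈ Ioo (0:ℝ) 1) :
    |-(x^2)⁻¹| • ((((x⁻¹:ℝ)):ℂ) ^ (w - 1) * ((|1 - x⁻¹| : ℝ) : ℂ) ^ (-z)) =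
      (x:ℂ) ^ (z - w - 1) * (1 - (x:ℂ)) ^ ((1-z) - 1) := by
  obtain ⟨hx0, hx1⟩ := hx
  have hxne : (x:ℂ) ≠ 0 := ofReal_ne_zero.2 hx0.ne'
  have harg : (x:ℂ).arg ≠ Real.pi := by
    rw [Complex.arg_ofReal_of_nonneg hx0.le]; positivity
  have habs : |1 - x⁻¹| = (1-x) * x⁻¹ := by
    rw [abs_of_nonpos (by simp [(one_le_inv₀ hx0).2 hx1.le])]
    field_simp
    ring
  have h1 : ((|1 - x⁻¹| : ℝ) : ℂ) ^ (-z) = ((1-x:ℝ):ℂ)^(-z) * ((x:ℂ)⁻¹)^(-z) := by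
    rw [habs, Complex.ofReal_mul, mul_cpow_ofReal_nonneg (by linarith) (by positivity),
      Complex.ofReal_inv]
  have h2 : (((x⁻¹:ℝ)):ℂ) = (x:ℂ)⁻¹ := by push_cast; ring
  have h3 : ∀ s : ℂ, ((x:ℂ)⁻¹)^s = (x:ℂ)^(-s) := fun s => by
    rw [inv_cpow _ _ harg, ← cpow_neg]
  have h4 : |-(x^2)⁻¹| = x⁻¹ * x⁻¹ := by
    have h5 : |x^2| = x^2 := abs_of_nonneg (sq_nonneg x)
    rw [abs_neg, abs_inv, h5, pow_two, mul_inv]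
  rw [h1, h2, h3, h3, h4, Complex.real_smul, neg_neg]
  push_cast
  rw [show ((x:ℂ)⁻¹ * (x:ℂ)⁻¹) = (x:ℂ)^(-1-1 : ℂ) by
    rw [show (-1-1 : ℂ) = (-1) + (-1) by ring, cpow_add _ _ hxne, cpow_neg_one]]
  rw [show (1:ℂ) - x = ((1-x : ℝ):ℂ) by push_cast; ring]
  rw [show ((1:ℂ)-z) - 1 = -z by ring]
  rw [show (x:ℂ)^(-1-1:ℂ) * ((x:ℂ)^(-(w-1)) * (((1-x:ℝ):ℂ)^(-z) * (x:ℂ)^z)) =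
      ((x:ℂ)^(-1-1:ℂ) * (x:ℂ)^(-(w-1)) * (x:ℂ)^z) * ((1-x:ℝ):ℂ)^(-z) from by ring,
    ← cpow_add _ _ hxne, ← cpow_add _ _ hxne,
    show (-1-1:ℂ) + -(w-1) + z = z-w-1 from by ring]

/-- For `0 < Re w < Re z < 1`,
`∫₀^∞ λ^{w-1} |1-λ|^{-z} dλ = Γ(w)Γ(1-z)/Γ(1+w-z) + Γ(z-w)Γ(1-z)/Γ(1-w)`. -/
theorem stmt_0 (w z : ℂ) (h0 : 0 < w.re) (h1 : w.re < z.re) (h2 : z.re < 1) :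
    ∫ l in Set.Ioi (0 : ℝ), (l : ℂ) ^ (w - 1) * ((|1 - l| : ℝ) : ℂ) ^ (-z) =
      Gamma w * Gamma (1 - z) / Gamma (1 + w - z) +
        Gamma (z - w) * Gamma (1 - z) / Gamma (1 - w) := by
  set F : ℝ → ℂ := fun l => (l : ℂ) ^ (w - 1) * ((|1 - l| : ℝ) : ℂ) ^ (-z) with hF
  have hz1 : 0 < (1-z).re := by simp [Complex.sub_re]; linarith
  have hzw : 0 < (z-w).re := by simp [Complex.sub_re]; linarith
  have beta_Ioo : ∀ u v : ℂ,
      betaIntegral u v = ∫ x in Ioo (0:ℝ) 1, (x:ℂ)^(u-1)*(1-(x:ℂ))^(v-1) := by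
    intro u v
    rw [Complex.betaIntegral, intervalIntegral.integral_of_le zero_le_one,
      MeasureTheory.integral_Ioc_eq_integral_Ioo]
  have int_beta : ∀ u v : ℂ, 0 < u.re → 0 < v.re →
      IntegrableOn (fun x:ℝ => (x:ℂ)^(u-1)*(1-(x:ℂ))^(v-1)) (Ioo 0 1) := fun u v hu hv =>
    ((Complex.betaIntegral_convergent hu hv).1).mono_set Ioo_subset_Ioc_self
  have hcong : EqOn F (fun x : ℝ => (x:ℂ)^(w-1)*(1-(x:ℂ))^((1-z)-1)) (Ioo 0 1) := by
    intro x hx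
    have : |1 - x| = 1 - x := abs_of_nonneg (by linarith [hx.2])
    simp only [hF, this]
    rw [show ((1-x:ℝ):ℂ) = 1 - (x:ℂ) by push_cast; ring, show ((1:ℂ)-z)-1 = -z by ring]
  have hIoo_int : IntegrableOn F (Ioo 0 1) :=
    (int_beta w (1-z) h0 hz1).congr_fun hcong.symm measurableSet_Ioo
  have hIoo_val : ∫ x in Ioo (0:ℝ) 1, F x = betaIntegral w (1-z) := by
    rw [beta_Ioo]; exact setIntegral_congr_fun measurableSet_Ioo hcong
  have himg : Inv.inv '' Ioo (0:ℝ) 1 = Ioi 1 := by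
    have h : (Ioo (0:ℝ) 1) = (Ioi 1)⁻¹ := by rw [Set.inv_Ioi₀ one_pos, inv_one]
    rw [h]; ext x; simp [Set.mem_inv]
  have hderiv : ∀ x ∈ Ioo (0:ℝ) 1, HasDerivWithinAt Inv.inv (-(x^2)⁻¹) (Ioo 0 1) x :=
    fun x hx => (hasDerivAt_inv hx.1.ne').hasDerivWithinAt
  have hinj : InjOn (Inv.inv : ℝ → ℝ) (Ioo (0:ℝ) 1) := inv_injective.injOn
  have hkey : EqOn (fun x : ℝ => |-(x^2)⁻¹| • F x⁻¹)
      (fun x : ℝ => (x:ℂ)^((z-w)-1)*(1-(x:ℂ))^((1-z)-1)) (Ioo 0 1) := by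
    intro x hx
    exact key_pt w z x hx
  have hIoi_val : ∫ x in Ioi (1:ℝ), F x = betaIntegral (z-w) (1-z) := by
    rw [← himg, integral_image_eq_integral_abs_deriv_smul measurableSet_Ioo hderiv hinj F,
      beta_Ioo]
    exact setIntegral_congr_fun measurableSet_Ioo hkey
  have hIoi_int : IntegrableOn F (Ioi 1) := by
    rw [← himg,
      integrableOn_image_iff_integrableOn_abs_deriv_smul measurableSet_Ioo hderiv hinj F]
    exact (int_beta (z-w) (1-z) hzw hz1).congr_fun hkey.symm measurableSet_Ioo
  have hIci_int : IntegrableOn F (Ici 1) := by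
    rwa [integrableOn_Ici_iff_integrableOn_Ioi]
  have hsplit : ∫ l in Ioi (0:ℝ), F l = (∫ l in Ioo (0:ℝ) 1, F l) + ∫ l in Ici (1:ℝ), F l := by
    rw [← setIntegral_union ((Iio_disjoint_Ici le_rfl).mono_left Ioo_subset_Iio_self) measurableSet_Ici hIoo_int hIci_int,
      Ioo_union_Ici_eq_Ioi zero_lt_one]
  have hG1 : Gamma w * Gamma (1 - z) / Gamma (1 + w - z) = betaIntegral w (1-z) := by
    have h := Complex.Gamma_mul_Gamma_eq_betaIntegral h0 hz1
    rw [show w + (1-z) = 1+w-z by ring] at h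
    rw [h, mul_div_cancel_left₀]
    exact Complex.Gamma_ne_zero_of_re_pos (by simp [Complex.add_re, Complex.sub_re]; linarith)
  have hG2 : Gamma (z-w) * Gamma (1 - z) / Gamma (1 - w) = betaIntegral (z-w) (1-z) := by
    have h := Complex.Gamma_mul_Gamma_eq_betaIntegral hzw hz1
    rw [show (z-w) + (1-z) = 1-w by ring] at h
    rw [h, mul_div_cancel_left₀]
    exact Complex.Gamma_ne_zero_of_re_pos (by simp [Complex.sub_re]; linarith)
  rw [hsplit, integral_Ici_eq_integral_Ioi, hIoo_val, hIoi_val, hG1, hG2]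
end

section
/- For 0 < Re(w) < Re(z) < 1, one has the identity Γ(w)Γ(1-z)/Γ(1+w-z) + Γ(z-w)Γ(1-z)/Γ(1-w) + Γ(z-w)Γ(w)/Γ(z) = 2^z sin(πz/2) Γ(1-z) · [Γ(w/2)Γ((z-w)/2)] / [Γ((1-w)/2)Γ((1-z+w)/2)]. -/
open Complex

private lemma trig_gen (a b : ℂ) :
    Complex.sin (2*b) + Complex.sin (2*a) + Complex.sin (2*(a+b)) =
      4 * Complex.sin (a+b) * Complex.cos a * Complex.cos b := by
  simp only [Complex.sin_two_mul, Complex.sin_add, Complex.cos_add, two_mul, mul_add, add_mul]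
  ring_nf
  simp [Complex.sin_sq, Complex.cos_sq]
  ring

private lemma keyP (x : ℂ) (hx0 : 0 < x.re) (hx1 : x.re < 1) :
    (2:ℂ)^x * Gamma (x/2) * (Real.sqrt Real.pi : ℂ) =
      2 * Gamma x * Complex.cos (Real.pi * x / 2) * Gamma ((1-x)/2) := by
  have hne : Gamma ((1+x)/2) ≠ 0 := by
    apply Gamma_ne_zero_of_re_pos
    simp only [div_ofNat_re, add_re, one_re]
    positivity
  have hne' : Gamma ((1-x)/2) ≠ 0 := by
    apply Gamma_ne_zero_of_re_pos
    simp only [div_ofNat_re, sub_re, one_re]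
    linarith
  have dup := Complex.Gamma_mul_Gamma_add_half (x/2)
  rw [show x/2 + 1/2 = (1+x)/2 by ring, show 2*(x/2) = x by ring] at dup
  have hrefl := Complex.Gamma_mul_Gamma_one_sub ((1+x)/2)
  rw [show (1:ℂ) - (1+x)/2 = (1-x)/2 by ring] at hrefl
  have hsin : Complex.sin ((Real.pi : ℂ) * ((1+x)/2)) = Complex.cos ((Real.pi:ℂ) * x / 2) := by
    rw [show (Real.pi : ℂ) * ((1+x)/2) = (Real.pi:ℂ) * x / 2 + Real.pi/2 by push_cast; ring]
    rw [Complex.sin_add]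
    simp
  rw [hsin] at hrefl
  have hcos : Complex.cos ((Real.pi:ℂ) * x / 2) ≠ 0 := by
    intro h
    rw [h, div_zero] at hrefl
    exact mul_ne_zero hne hne' hrefl
  have refl' : Gamma ((1+x)/2) * Gamma ((1-x)/2) * Complex.cos ((Real.pi:ℂ) * x / 2)
      = (Real.pi : ℂ) := by
    rw [hrefl]; field_simp
  have pow2 : (2:ℂ)^x * (2:ℂ)^((1:ℂ)-x) = 2 := by
    rw [← Complex.cpow_add _ _ two_ne_zero]
    norm_num
  have sqpi : (Real.sqrt Real.pi : ℂ) * (Real.sqrt Real.pi : ℂ) = (Real.pi : ℂ) := by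
    norm_cast
    exact Real.mul_self_sqrt Real.pi_pos.le
  apply mul_left_cancel₀ hne
  linear_combination ((2:ℂ)^x * (Real.sqrt Real.pi : ℂ)) * dup
    - 2 * Gamma x * refl'
    + Gamma x * (2:ℂ)^x * (2:ℂ)^((1:ℂ)-x) * sqpi
    + Gamma x * (Real.pi:ℂ) * pow2

/-- Matt Young's Gamma-ratio identity, for `0 < Re w < Re z < 1`. -/
theorem stmt_2 (w z : ℂ) (h0 : 0 < w.re) (h1 : w.re < z.re) (h2 : z.re < 1) :
    Gamma w * Gamma (1 - z) / Gamma (1 + w - z) +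
      Gamma (z - w) * Gamma (1 - z) / Gamma (1 - w) +
      Gamma (z - w) * Gamma w / Gamma z =
    (2 : ℂ) ^ z * Complex.sin (Real.pi * z / 2) * Gamma (1 - z) *
      (Gamma (w / 2) * Gamma ((z - w) / 2)) /
      (Gamma ((1 - w) / 2) * Gamma ((1 - z + w) / 2)) := by
  have pi_ne : (Real.pi : ℂ) ≠ 0 := Complex.ofReal_ne_zero.mpr Real.pi_ne_zero
  have gpos : ∀ x : ℂ, 0 < x.re → Gamma x ≠ 0 := fun x hx => Gamma_ne_zero_of_re_pos hx
  have hA : Gamma w ≠ 0 := gpos _ h0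
  have hB : Gamma (z - w) ≠ 0 := gpos _ (by simp [sub_re]; linarith)
  have hC : Gamma (1 - z) ≠ 0 := gpos _ (by simp [sub_re]; linarith)
  have hD : Gamma (1 + w - z) ≠ 0 := gpos _ (by simp [add_re, sub_re]; linarith)
  have hE : Gamma (1 - w) ≠ 0 := gpos _ (by simp [sub_re]; linarith)
  have hF : Gamma z ≠ 0 := gpos _ (by linarith)
  have hG : Gamma ((1 - w)/2) ≠ 0 := gpos _ (by simp [div_ofNat_re, sub_re]; linarith)
  have hH : Gamma ((1 - z + w)/2) ≠ 0 := gpos _ (by simp [div_ofNat_re, add_re, sub_re]; linarith)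
  -- reflection formulas with nonzero sines
  have mkrefl : ∀ x : ℂ, Gamma x ≠ 0 → Gamma (1 - x) ≠ 0 →
      Gamma x * Gamma (1 - x) * Complex.sin ((Real.pi:ℂ) * x) = (Real.pi : ℂ) := by
    intro x hx hx'
    have r := Complex.Gamma_mul_Gamma_one_sub x
    have hs : Complex.sin ((Real.pi:ℂ) * x) ≠ 0 := by
      intro h
      rw [h, div_zero] at r
      exact mul_ne_zero hx hx' r
    rw [r]; field_simp
  have rw' : Gamma w * Gamma (1 - w) * Complex.sin ((Real.pi:ℂ) * w) = (Real.pi : ℂ) :=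
    mkrefl w hA hE
  have rzw : Gamma (z - w) * Gamma (1 + w - z) * Complex.sin ((Real.pi:ℂ) * (z - w))
      = (Real.pi : ℂ) := by
    have := mkrefl (z - w) hB (by rwa [show (1:ℂ) - (z - w) = 1 + w - z by ring])
    rwa [show (1:ℂ) - (z - w) = 1 + w - z by ring] at this
  have rz : Gamma z * Gamma (1 - z) * Complex.sin ((Real.pi:ℂ) * z) = (Real.pi : ℂ) :=
    mkrefl z hF hC
  -- key duplication-reflection lemmas
  have Kw := keyP w h0 (by linarith)
  have Kzw := keyP (z - w) (by simp [sub_re]; linarith) (by simp [sub_re]; linarith)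
  rw [show ((1:ℂ) - (z - w))/2 = (1 - z + w)/2 by ring] at Kzw
  -- trig identity
  have trig := trig_gen ((Real.pi:ℂ) * w / 2) ((Real.pi:ℂ) * (z - w) / 2)
  rw [show 2 * ((Real.pi:ℂ) * (z - w) / 2) = (Real.pi:ℂ) * (z - w) by ring,
    show 2 * ((Real.pi:ℂ) * w / 2) = (Real.pi:ℂ) * w by ring,
    show 2 * ((Real.pi:ℂ) * w / 2 + (Real.pi:ℂ) * (z - w) / 2) = (Real.pi:ℂ) * z by ring,
    show (Real.pi:ℂ) * w / 2 + (Real.pi:ℂ) * (z - w) / 2 = (Real.pi:ℂ) * z / 2 by ring] at trig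
  -- powers of two and sqrt pi
  have pow2 : (2:ℂ)^z = (2:ℂ)^w * (2:ℂ)^(z - w) := by
    rw [← Complex.cpow_add _ _ two_ne_zero]; ring_nf
  have sqpi : (Real.sqrt Real.pi : ℂ) * (Real.sqrt Real.pi : ℂ) = (Real.pi : ℂ) := by
    norm_cast; exact Real.mul_self_sqrt Real.pi_pos.le
  have sq_ne : (Real.sqrt Real.pi : ℂ) ≠ 0 :=
    Complex.ofReal_ne_zero.mpr (by positivity)
  -- product of the two key lemmas
  have PQ : ((2:ℂ)^w * Gamma (w/2) * (Real.sqrt Real.pi : ℂ)) *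
      ((2:ℂ)^(z - w) * Gamma ((z - w)/2) * (Real.sqrt Real.pi : ℂ)) =
      (2 * Gamma w * Complex.cos ((Real.pi:ℂ) * w / 2) * Gamma ((1 - w)/2)) *
      (2 * Gamma (z - w) * Complex.cos ((Real.pi:ℂ) * (z - w) / 2) * Gamma ((1 - z + w)/2)) := by
    rw [Kw, Kzw]
  have PQ' : (2:ℂ)^z * Gamma (w/2) * Gamma ((z - w)/2) * (Real.pi:ℂ) =
      4 * Gamma w * Gamma (z - w) * Complex.cos ((Real.pi:ℂ) * w / 2) *
        Complex.cos ((Real.pi:ℂ) * (z - w) / 2) * (Gamma ((1 - w)/2) * Gamma ((1 - z + w)/2)) := by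
    linear_combination PQ + (Gamma (w/2) * Gamma ((z - w)/2) * (Real.pi:ℂ)) * pow2
      - ((2:ℂ)^w * (2:ℂ)^(z - w) * Gamma (w/2) * Gamma ((z - w)/2)) * sqpi
  have t1 : Gamma w * Gamma (1 - z) / Gamma (1 + w - z) =
      Gamma w * Gamma (z - w) * Gamma (1 - z) * Complex.sin ((Real.pi:ℂ) * (z - w)) / Real.pi := by
    rw [div_eq_div_iff hD pi_ne]
    linear_combination (-(Gamma w * Gamma (1 - z))) * rzw
  have t2 : Gamma (z - w) * Gamma (1 - z) / Gamma (1 - w) =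
      Gamma w * Gamma (z - w) * Gamma (1 - z) * Complex.sin ((Real.pi:ℂ) * w) / Real.pi := by
    rw [div_eq_div_iff hE pi_ne]
    linear_combination (-(Gamma (z - w) * Gamma (1 - z))) * rw'
  have t3 : Gamma (z - w) * Gamma w / Gamma z =
      Gamma w * Gamma (z - w) * Gamma (1 - z) * Complex.sin ((Real.pi:ℂ) * z) / Real.pi := by
    rw [div_eq_div_iff hF pi_ne]
    linear_combination (-(Gamma (z - w) * Gamma w)) * rz
  have rhs_eq : (2 : ℂ) ^ z * Complex.sin ((Real.pi:ℂ) * z / 2) * Gamma (1 - z) *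
      (Gamma (w / 2) * Gamma ((z - w) / 2)) /
      (Gamma ((1 - w) / 2) * Gamma ((1 - z + w) / 2)) =
      4 * Gamma w * Gamma (z - w) * Gamma (1 - z) * Complex.sin ((Real.pi:ℂ) * z / 2) *
        Complex.cos ((Real.pi:ℂ) * w / 2) * Complex.cos ((Real.pi:ℂ) * (z - w) / 2) / Real.pi := by
    rw [div_eq_div_iff (mul_ne_zero hG hH) pi_ne]
    linear_combination (Complex.sin ((Real.pi:ℂ) * z / 2) * Gamma (1 - z)) * PQ'
  have cast1 : (Real.pi * z / 2 : ℂ) = (Real.pi : ℂ) * z / 2 := by norm_num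
  rw [cast1, t1, t2, t3, rhs_eq]
  linear_combination (Gamma w * Gamma (z - w) * Gamma (1 - z) / Real.pi) * trig
end

section
/- Let q > 1 and let m, n be positive integers with gcd(mn, q) = 1. Then the sum over even primitive Dirichlet characters χ mod q of χ(m)·conj(χ)(n) equals (1/2)·∑_{dr = q, r | m-n or r | m+n} μ(d)φ(r), where in the inner sum each r dividing both m-n and m+n is counted twice. -/
open Complex DirichletCharacter
open scoped Classical

namespace Stmt3Aux

open Finset

lemma unitsMap_trans_apply {x y z : ℕ} (h1 : x ∣ y) (h2 : y ∣ z) (w : (ZMod z)ˣ) :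
    ZMod.unitsMap (dvd_trans h1 h2) w = ZMod.unitsMap h1 (ZMod.unitsMap h2 w) := by
  rw [← ZMod.unitsMap_comp]
  rfl

lemma crt_lift {s r c : ℕ} [NeZero s] (hrs : r ∣ s) (hcs : c ∣ s)
    (u : (ZMod r)ˣ) (hu : ZMod.unitsMap (Nat.gcd_dvd_right c r) u = 1) :
    ∃ w : (ZMod s)ˣ, ZMod.unitsMap hrs w = u ∧ ZMod.unitsMap hcs w = 1 := by
  have hr0 : r ≠ 0 := fun h => NeZero.ne s (Nat.eq_zero_of_zero_dvd (h ▸ hrs))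
  have hc0 : c ≠ 0 := fun h => NeZero.ne s (Nat.eq_zero_of_zero_dvd (h ▸ hcs))
  haveI : NeZero r := ⟨hr0⟩
  haveI : NeZero c := ⟨hc0⟩
  have hag : (u : ZMod r).val ≡ 1 [MOD Nat.gcd r c] := by
    have h1 : (((u : ZMod r).val : ℕ) : ZMod (Nat.gcd c r)) = ((1 : ℕ) : ZMod (Nat.gcd c r)) := by
      have h2 := congrArg (Units.val) hu
      rw [ZMod.unitsMap_def] at h2
      simp only [Units.coe_map, MonoidHom.coe_coe, Units.val_one] at h2
      rw [ZMod.natCast_val, Nat.cast_one, ← h2, ZMod.castHom_apply]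
    rw [Nat.gcd_comm]
    exact (ZMod.natCast_eq_natCast_iff _ _ _).mp h1
  obtain ⟨k, hk1, hk2⟩ := Nat.chineseRemainder' hag
  have hkr : ((k : ℕ) : ZMod r) = (u : ZMod r) := by
    rw [(ZMod.natCast_eq_natCast_iff _ _ _).mpr hk1, ZMod.natCast_val, ZMod.cast_id]
  have hkc : ((k : ℕ) : ZMod c) = 1 := by
    rw [(ZMod.natCast_eq_natCast_iff _ _ _).mpr hk2, Nat.cast_one]
  have hcopr : Nat.Coprime k r := (ZMod.isUnit_iff_coprime k r).mp (hkr ▸ u.isUnit)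
  have hcopc : Nat.Coprime k c := (ZMod.isUnit_iff_coprime k c).mp (hkc ▸ isUnit_one)
  have hlcm : Nat.lcm r c ∣ s := Nat.lcm_dvd hrs hcs
  haveI : NeZero (Nat.lcm r c) := ⟨Nat.lcm_ne_zero hr0 hc0⟩
  have hklcm : IsUnit ((k : ℕ) : ZMod (Nat.lcm r c)) :=
    (ZMod.isUnit_iff_coprime k _).mpr <|
      Nat.Coprime.coprime_dvd_right
        (Nat.lcm_dvd (dvd_mul_right r c) (dvd_mul_left c r)) (hcopr.mul_right hcopc)
  obtain ⟨w, hw⟩ := ZMod.unitsMap_surjective hlcm hklcm.unit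
  refine ⟨w, ?_, ?_⟩
  · have h3 : ZMod.unitsMap hrs w
        = ZMod.unitsMap (dvd_lcm_left r c) (ZMod.unitsMap hlcm w) :=
      unitsMap_trans_apply _ _ _
    rw [h3, hw]
    ext
    rw [ZMod.unitsMap_def]
    simp only [Units.coe_map, MonoidHom.coe_coe, IsUnit.unit_spec]
    rw [map_natCast, hkr]
  · have h3 : ZMod.unitsMap hcs w
        = ZMod.unitsMap (dvd_lcm_right r c) (ZMod.unitsMap hlcm w) :=
      unitsMap_trans_apply _ _ _
    rw [h3, hw]
    ext
    rw [ZMod.unitsMap_def]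
    simp only [Units.coe_map, MonoidHom.coe_coe, IsUnit.unit_spec, Units.val_one]
    rw [map_natCast, hkc]

lemma conductor_changeLevel_eq {r s : ℕ} [NeZero s] (hrs : r ∣ s)
    (ψ : DirichletCharacter ℂ r) :
    (changeLevel hrs ψ).conductor = ψ.conductor := by
  haveI : NeZero r := ⟨fun h => NeZero.ne s (Nat.eq_zero_of_zero_dvd (h ▸ hrs))⟩
  have hψf := factorsThrough_conductor ψ
  have hle : (changeLevel hrs ψ).conductor ≤ ψ.conductor := by
    refine Nat.sInf_le ⟨hψf.dvd.trans hrs, hψf.χ₀, ?_⟩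
    rw [changeLevel_trans _ hψf.dvd hrs, ← hψf.eq_changeLevel]
  have hge : ψ.conductor ≤ (changeLevel hrs ψ).conductor := by
    have hcs : (changeLevel hrs ψ).conductor ∣ s := conductor_dvd_level _
    have hft : FactorsThrough ψ (Nat.gcd (changeLevel hrs ψ).conductor r) := by
      rw [factorsThrough_iff_ker_unitsMap (Nat.gcd_dvd_right _ r)]
      intro u hu
      rw [MonoidHom.mem_ker] at hu
      obtain ⟨w, hw1, hw2⟩ := crt_lift hrs hcs u hu
      rw [MonoidHom.mem_ker]
      have h1 : (changeLevel hrs ψ).toUnitHom w = ψ.toUnitHom u := by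
        rw [changeLevel_toUnitHom, MonoidHom.comp_apply, hw1]
      have hcf := factorsThrough_conductor (changeLevel hrs ψ)
      have h2 : (changeLevel hrs ψ).toUnitHom w = 1 := by
        conv_lhs => rw [hcf.eq_changeLevel]
        rw [changeLevel_toUnitHom, MonoidHom.comp_apply]
        rw [show ZMod.unitsMap hcf.dvd w = ZMod.unitsMap hcs w from rfl, hw2, map_one]
      rw [← h1, h2]
    calc ψ.conductor ≤ Nat.gcd (changeLevel hrs ψ).conductor r := Nat.sInf_le hft
      _ ≤ (changeLevel hrs ψ).conductor :=
        Nat.le_of_dvd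
          (Nat.pos_of_ne_zero (conductor_ne_zero _)) (Nat.gcd_dvd_left _ _)
  exact le_antisymm hle hge

lemma changeLevel_intCast {r s : ℕ} (hrs : r ∣ s) (ψ : DirichletCharacter ℂ r) (a : ℤ)
    (ha : IsUnit ((a : ZMod s))) :
    (changeLevel hrs ψ) ((a : ZMod s)) = ψ ((a : ZMod r)) := by
  have h := changeLevel_eq_cast_of_dvd ψ hrs ha.unit
  rw [IsUnit.unit_spec] at h
  rw [h, show (ZMod.cast ((a : ZMod s)) : ZMod r)
      = ZMod.castHom hrs (ZMod r) ((a : ZMod s)) from (ZMod.castHom_apply _).symm,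
    map_intCast]

lemma conj_eval {r : ℕ} (χ : DirichletCharacter ℂ r) {b : ZMod r} (hb : IsUnit b) :
    (starRingEnd ℂ) (χ b) = χ b⁻¹ := by
  have h1 : χ b * χ b⁻¹ = 1 := by rw [← map_mul, ZMod.mul_inv_of_unit b hb, map_one]
  have h2 : (starRingEnd ℂ) (χ b) * χ b = 1 := by
    rw [mul_comm, Complex.mul_conj, ← Complex.ofReal_one]
    norm_cast
    rw [Complex.normSq_eq_norm_sq, ← hb.unit_spec,
      DirichletCharacter.unit_norm_eq_one χ hb.unit, one_pow]
  calc (starRingEnd ℂ) (χ b) = (starRingEnd ℂ) (χ b) * (χ b * χ b⁻¹) := by rw [h1, mul_one]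
    _ = ((starRingEnd ℂ) (χ b) * χ b) * χ b⁻¹ := by ring
    _ = χ b⁻¹ := by rw [h2, one_mul]

lemma ortho (r : ℕ) [NeZero r] (a b : ℤ) (hb : IsUnit ((b : ZMod r))) :
    (∑ χ : DirichletCharacter ℂ r, χ ((a : ZMod r)) * (starRingEnd ℂ) (χ ((b : ZMod r))))
      = if ((r : ℤ) ∣ a - b) then (r.totient : ℂ) else 0 := by
  have h1 : ∀ χ : DirichletCharacter ℂ r,
      χ ((a : ZMod r)) * (starRingEnd ℂ) (χ ((b : ZMod r)))
        = χ ((b : ZMod r))⁻¹ * χ ((a : ZMod r)) := fun χ => by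
    rw [conj_eval χ hb, mul_comm]
  rw [Finset.sum_congr rfl (fun χ _ => h1 χ), sum_char_inv_mul_char_eq ℂ hb _]
  have h2 : ((b : ZMod r) = (a : ZMod r)) ↔ ((r : ℤ) ∣ a - b) := by
    rw [ZMod.intCast_eq_intCast_iff, Int.ModEq]
    constructor
    · intro h
      exact Int.ModEq.dvd h
    · intro h
      exact (Int.modEq_iff_dvd.mpr h)
  rw [if_congr h2 rfl rfl]

/-- Sum over primitive characters mod `r` of `ψ(a) conj(ψ(b))`. -/
noncomputable def gP (a b : ℤ) (r : ℕ) : ℂ :=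
  ∑ ψ : DirichletCharacter ℂ r,
    if ψ.IsPrimitive then ψ ((a : ZMod r)) * (starRingEnd ℂ) (ψ ((b : ZMod r))) else 0

lemma sum_div (s : ℕ) [NeZero s] (a b : ℤ) (ha : IsUnit ((a : ZMod s)))
    (hb : IsUnit ((b : ZMod s))) :
    (∑ χ : DirichletCharacter ℂ s, χ ((a : ZMod s)) * (starRingEnd ℂ) (χ ((b : ZMod s))))
      = ∑ r ∈ s.divisors, gP a b r := by
  rw [← Finset.sum_fiberwise_of_maps_to (g := fun χ : DirichletCharacter ℂ s => χ.conductor)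
      (t := s.divisors)
      (fun χ _ => Nat.mem_divisors.mpr ⟨conductor_dvd_level χ, NeZero.ne s⟩)]
  refine Finset.sum_congr rfl fun r hr => ?_
  have hrs : r ∣ s := (Nat.mem_divisors.mp hr).1
  rw [gP, ← Finset.sum_filter]
  refine (Finset.sum_bij (i := fun (ψ : DirichletCharacter ℂ r) _ => changeLevel hrs ψ)
    ?_ ?_ ?_ ?_).symm
  · intro ψ hψ
    simp only [Finset.mem_filter, Finset.mem_univ, true_and] at hψ ⊢
    rw [conductor_changeLevel_eq hrs ψ, hψ]
  · intro ψ₁ _ ψ₂ _ h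
    exact changeLevel_injective hrs h
  · intro χ hχ
    simp only [Finset.mem_filter, Finset.mem_univ, true_and] at hχ
    subst hχ
    have hcf := factorsThrough_conductor χ
    refine ⟨hcf.χ₀, ?_, hcf.eq_changeLevel.symm⟩
    simp only [Finset.mem_filter, Finset.mem_univ, true_and]
    show hcf.χ₀.conductor = χ.conductor
    rw [← conductor_changeLevel_eq hrs hcf.χ₀]
    exact congrArg conductor hcf.eq_changeLevel.symm
  · intro ψ _
    rw [changeLevel_intCast hrs ψ a ha, changeLevel_intCast hrs ψ b hb]

lemma moebius_g (q : ℕ) [NeZero q] (a b : ℤ) (ha : IsUnit ((a : ZMod q)))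
    (hb : IsUnit ((b : ZMod q))) :
    gP a b q = ∑ d ∈ q.divisors, (ArithmeticFunction.moebius d : ℂ) *
      (if (((q / d : ℕ) : ℤ)) ∣ a - b then ((q / d).totient : ℂ) else 0) := by
  have key := (ArithmeticFunction.sum_eq_iff_sum_mul_moebius_eq_on
      (f := gP a b) (g := fun t => if ((t : ℤ) ∣ a - b) then (t.totient : ℂ) else 0)
      {t | t ∣ q} (fun x y hxy hy => hxy.trans hy)).mp ?_ q
      (Nat.pos_of_ne_zero (NeZero.ne q)) (dvd_refl q)
  · rw [← key, ← Nat.sum_divisorsAntidiagonal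
      (f := fun d e => (ArithmeticFunction.moebius d : ℂ) *
        (if ((e : ℤ) ∣ a - b) then (e.totient : ℂ) else 0))]
  · intro t ht hts
    haveI : NeZero t := ⟨ht.ne'⟩
    have hat : IsUnit ((a : ZMod t)) := by
      rw [show ((a : ZMod t)) = ZMod.castHom hts (ZMod t) ((a : ZMod q)) from
        (map_intCast _ a).symm]
      exact ha.map _
    have hbt : IsUnit ((b : ZMod t)) := by
      rw [show ((b : ZMod t)) = ZMod.castHom hts (ZMod t) ((b : ZMod q)) from
        (map_intCast _ b).symm]
      exact hb.map _
    exact (sum_div t a b hat hbt).symm.trans (ortho t a b hbt)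

end Stmt3Aux

open Stmt3Aux

/-- Orthogonality for even primitive characters: for `q > 1` and `gcd(mn,q) = 1`,
`∑_{χ mod q even primitive} χ(m) conj(χ(n))
  = (1/2) ∑_{dr = q, r | m±n} μ(d) φ(r)`,
where an `r` dividing both `m - n` and `m + n` is counted twice. -/
theorem stmt_3 (q m n : ℕ) [NeZero q] (hq : 1 < q) (hm : 0 < m) (hn : 0 < n)
    (hco : Nat.Coprime (m * n) q) :
    (∑ χ : DirichletCharacter ℂ q,
        if χ.IsPrimitive ∧ χ (-1) = 1 then
          χ (m : ZMod q) * (starRingEnd ℂ) (χ (n : ZMod q)) else 0) =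
    (1 / 2 : ℂ) * ∑ d ∈ q.divisors,
      (ArithmeticFunction.moebius d : ℂ) * (Nat.totient (q / d) : ℂ) *
        ((if ((q / d : ℕ) : ℤ) ∣ ((m : ℤ) - n) then 1 else 0) +
          (if ((q / d : ℕ) : ℤ) ∣ ((m : ℤ) + n) then 1 else 0)) := by
  have hmq : Nat.Coprime m q := Nat.Coprime.coprime_dvd_left (dvd_mul_right m n) hco
  have hnq : Nat.Coprime n q := Nat.Coprime.coprime_dvd_left (dvd_mul_left n m) hco
  have ham : IsUnit (((m : ℤ) : ZMod q)) := by
    rw [Int.cast_natCast]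
    exact (ZMod.isUnit_iff_coprime m q).mpr hmq
  have hamn : IsUnit ((Int.cast (-(m : ℤ)) : ZMod q)) := by
    push_cast
    push_cast at ham
    exact ham.neg
  have hbn : IsUnit (((n : ℤ) : ZMod q)) := by
    rw [Int.cast_natCast]
    exact (ZMod.isUnit_iff_coprime n q).mpr hnq
  have step : ∀ χ : DirichletCharacter ℂ q,
      (if χ.IsPrimitive ∧ χ (-1) = 1 then
          χ (m : ZMod q) * (starRingEnd ℂ) (χ (n : ZMod q)) else 0)
      = (1 / 2 : ℂ) *
        ((if χ.IsPrimitive then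
            χ (((m : ℤ) : ZMod q)) * (starRingEnd ℂ) (χ (((n : ℤ) : ZMod q))) else 0)
        + (if χ.IsPrimitive then
            χ ((Int.cast (-(m : ℤ)) : ZMod q)) * (starRingEnd ℂ) (χ (((n : ℤ) : ZMod q))) else 0)) := by
    intro χ
    have hc1 : (((m : ℤ) : ZMod q)) = ((m : ZMod q)) := Int.cast_natCast m
    have hc2 : (((n : ℤ) : ZMod q)) = ((n : ZMod q)) := Int.cast_natCast n
    have hc3 : ((Int.cast (-(m : ℤ)) : ZMod q)) = -((m : ZMod q)) := by push_cast; ring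
    rw [hc1, hc2, hc3]
    rcases χ.even_or_odd with he | ho
    · have hev : χ (-1) = 1 := he
      have hneg : χ (-(m : ZMod q)) = χ ((m : ZMod q)) := he.eval_neg χ ((m : ZMod q))
      rw [hneg]
      by_cases hp : χ.IsPrimitive
      · rw [if_pos ⟨hp, hev⟩, if_pos hp]
        ring
      · rw [if_neg (fun h => hp h.1), if_neg hp]
        ring
    · have hod : χ (-1) = -1 := ho
      have hne : ¬ (χ (-1) = 1) := by
        rw [hod]
        intro h
        have : (1 : ℂ) + 1 = 0 := by linear_combination -h
        norm_num at this
      have hneg : χ (-(m : ZMod q)) = -χ ((m : ZMod q)) := ho.eval_neg χ ((m : ZMod q))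
      rw [hneg, if_neg (fun h => hne h.2)]
      by_cases hp : χ.IsPrimitive
      · rw [if_pos hp, if_pos hp]
        ring
      · rw [if_neg hp, if_neg hp]
        ring
  rw [Finset.sum_congr rfl (fun χ _ => step χ), ← Finset.mul_sum, Finset.sum_add_distrib]
  have e1 : (∑ χ : DirichletCharacter ℂ q, if χ.IsPrimitive then
      χ (((m : ℤ) : ZMod q)) * (starRingEnd ℂ) (χ (((n : ℤ) : ZMod q))) else 0)
      = gP (m : ℤ) (n : ℤ) q := rfl
  have e2 : (∑ χ : DirichletCharacter ℂ q, if χ.IsPrimitive then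
      χ ((Int.cast (-(m : ℤ)) : ZMod q)) * (starRingEnd ℂ) (χ (((n : ℤ) : ZMod q))) else 0)
      = gP (-(m : ℤ)) (n : ℤ) q := rfl
  rw [e1, e2, moebius_g q (m : ℤ) (n : ℤ) ham hbn, moebius_g q (-(m : ℤ)) (n : ℤ) hamn hbn]
  rw [← Finset.sum_add_distrib]
  congr 1
  refine Finset.sum_congr rfl fun d _ => ?_
  have hcond : ((((q / d : ℕ) : ℤ)) ∣ (-(m : ℤ)) - (n : ℤ))
      ↔ (((q / d : ℕ) : ℤ) ∣ ((m : ℤ) + n)) := by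
    rw [show (-(m : ℤ)) - (n : ℤ) = -((m : ℤ) + n) by ring, dvd_neg]
  rw [if_congr hcond rfl rfl]
  split_ifs <;> ring
end

section
/- For every positive integer q, ∑_{dr = q} μ(d)φ(r) equals the number of primitive Dirichlet characters mod q. -/
open DirichletCharacter

lemma aux_factorsThrough_gcd {R : Type*} [CommMonoidWithZero R] {n : ℕ} [NeZero n]
    {χ : DirichletCharacter R n} {d e : ℕ} (hd : d ∣ n) (he : e ∣ n)
    (h1 : FactorsThrough χ d) (h2 : FactorsThrough χ e) :
    FactorsThrough χ (Nat.gcd d e) := by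
  have hg : Nat.gcd d e ∣ n := (Nat.gcd_dvd_left d e).trans hd
  rw [factorsThrough_iff_ker_unitsMap hg]
  rw [factorsThrough_iff_ker_unitsMap hd] at h1
  rw [factorsThrough_iff_ker_unitsMap he] at h2
  intro x hx
  rw [MonoidHom.mem_ker] at hx
  set a := ((x : (ZMod n)ˣ) : ZMod n).val with ha
  have hcop : a.Coprime n := ZMod.val_coe_unit_coprime x
  have hxa : ((x : (ZMod n)ˣ) : ZMod n) = (a : ZMod n) := by
    rw [ha, ZMod.natCast_val, ZMod.cast_id]
  -- a ≡ 1 mod gcd d e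
  have hmod : a ≡ 1 [MOD Nat.gcd d e] := by
    rw [← ZMod.natCast_eq_natCast_iff]
    have := congrArg (Units.val) hx
    rw [ZMod.unitsMap_def] at this
    simp only [Units.coe_map, MonoidHom.coe_coe, ZMod.castHom_apply, Units.val_one] at this
    rw [hxa, ZMod.cast_natCast hg] at this
    simpa using this
  -- CRT: find k ≡ a mod d, k ≡ 1 mod e
  obtain ⟨k, hk1, hk2⟩ := Nat.chineseRemainder' (n := d) (m := e) (a := a) (b := 1) hmod
  -- k coprime to lcm d e
  have had : a.Coprime d := hcop.coprime_dvd_right hd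
  have hkd : k.Coprime d := by rw [Nat.Coprime, hk1.gcd_eq]; exact had
  have hke : k.Coprime e := by rw [Nat.Coprime, hk2.gcd_eq, Nat.gcd_comm, Nat.gcd_one_right]
  have hkl : k.Coprime (Nat.lcm d e) :=
    Nat.Coprime.coprime_dvd_right (Nat.lcm_dvd_mul d e) (hkd.mul_right hke)
  have hlcm : Nat.lcm d e ∣ n := Nat.lcm_dvd hd he
  obtain ⟨Y, hY⟩ := ZMod.unitsMap_surjective hlcm (ZMod.unitOfCoprime k hkl)
  -- unitsMap he Y = 1
  have hYe : ZMod.unitsMap he Y = 1 := by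
    have h' : ZMod.unitsMap he Y = ZMod.unitsMap (Nat.dvd_lcm_right d e) (ZMod.unitsMap hlcm Y) := by
      rw [← MonoidHom.comp_apply, ZMod.unitsMap_comp]
    rw [h', hY]
    ext
    rw [ZMod.unitsMap_def]
    simp only [Units.coe_map, MonoidHom.coe_coe, ZMod.castHom_apply, ZMod.coe_unitOfCoprime,
      Units.val_one]
    rw [ZMod.cast_natCast (Nat.dvd_lcm_right d e)]
    rw [show (1 : ZMod e) = ((1 : ℕ) : ZMod e) by simp, ZMod.natCast_eq_natCast_iff]
    exact hk2
  have hYd : ZMod.unitsMap hd Y = ZMod.unitsMap hd x := by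
    have h' : ZMod.unitsMap hd Y = ZMod.unitsMap (Nat.dvd_lcm_left d e) (ZMod.unitsMap hlcm Y) := by
      rw [← MonoidHom.comp_apply, ZMod.unitsMap_comp]
    rw [h', hY]
    ext
    rw [ZMod.unitsMap_def, ZMod.unitsMap_def]
    simp only [Units.coe_map, MonoidHom.coe_coe, ZMod.castHom_apply, ZMod.coe_unitOfCoprime]
    rw [ZMod.cast_natCast (Nat.dvd_lcm_left d e), hxa, ZMod.cast_natCast hd,
      ZMod.natCast_eq_natCast_iff]
    exact hk1
  -- conclude
  rw [MonoidHom.mem_ker]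
  have e1 : χ.toUnitHom Y = 1 := h2 (by rw [MonoidHom.mem_ker, hYe])
  have e2 : χ.toUnitHom (Y⁻¹ * x) = 1 := h1 (by
    rw [MonoidHom.mem_ker, map_mul, map_inv, hYd, inv_mul_cancel])
  calc χ.toUnitHom x = χ.toUnitHom (Y * (Y⁻¹ * x)) := by rw [mul_inv_cancel_left]
    _ = 1 := by rw [map_mul, e1, e2, mul_one]

lemma aux_conductor_dvd_of_factorsThrough {R : Type*} [CommMonoidWithZero R] {n : ℕ} [NeZero n]
    {χ : DirichletCharacter R n} {d : ℕ} (h : FactorsThrough χ d) : conductor χ ∣ d := by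
  have hc : FactorsThrough χ (Nat.gcd d (conductor χ)) :=
    aux_factorsThrough_gcd h.dvd (conductor_dvd_level χ) h (factorsThrough_conductor χ)
  have h1 : conductor χ ≤ Nat.gcd d (conductor χ) := Nat.sInf_le hc
  have h2 : Nat.gcd d (conductor χ) ∣ conductor χ := Nat.gcd_dvd_right d _
  have hpos : 0 < conductor χ :=
    Nat.pos_of_ne_zero (conductor_ne_zero χ)
  have h3 : Nat.gcd d (conductor χ) ≤ conductor χ := Nat.le_of_dvd hpos h2
  have h4 : Nat.gcd d (conductor χ) = conductor χ := le_antisymm h3 h1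
  rw [← h4]
  exact Nat.gcd_dvd_left d _

lemma aux_conductor_changeLevel {R : Type*} [CommMonoidWithZero R] {n d : ℕ} [NeZero n]
    (hd : d ∣ n) (ψ : DirichletCharacter R d) (hψ : ψ.IsPrimitive) :
    conductor (changeLevel hd ψ) = d := by
  set χ := changeLevel hd ψ with hχ
  have hft : FactorsThrough χ d := ⟨hd, ψ, rfl⟩
  have hcd : conductor χ ∣ d := aux_conductor_dvd_of_factorsThrough hft
  obtain ⟨hc, χ₀, hχ₀⟩ := factorsThrough_conductor χ
  have hψft : FactorsThrough ψ (conductor χ) := by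
    refine ⟨hcd, χ₀, ?_⟩
    apply changeLevel_injective (R := R) hd
    exact hχ₀.trans (changeLevel_trans χ₀ hcd hd)
  have hle : conductor ψ ≤ conductor χ := Nat.sInf_le hψft
  rw [hψ] at hle
  have hdpos : 0 < d := Nat.pos_of_dvd_of_pos hd (Nat.pos_of_ne_zero (NeZero.ne n))
  exact le_antisymm (Nat.le_of_dvd hdpos hcd) hle

lemma aux_card_fiber {q d : ℕ} [NeZero q] (hd : d ∣ q) :
    Nat.card {χ : DirichletCharacter ℂ q // conductor χ = d} =
      Nat.card {ψ : DirichletCharacter ℂ d // ψ.IsPrimitive} := by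
  refine (Nat.card_eq_of_bijective (fun ψ => ⟨changeLevel hd ψ.1,
    aux_conductor_changeLevel hd ψ.1 ψ.2⟩) ⟨fun a b hab => ?_, fun χ => ?_⟩).symm
  · exact Subtype.ext (changeLevel_injective hd (congrArg Subtype.val hab))
  · obtain ⟨χ, h⟩ := χ
    subst h
    exact ⟨⟨χ.primitiveCharacter, χ.primitiveCharacter_isPrimitive⟩,
      Subtype.ext (factorsThrough_conductor χ).eq_changeLevel.symm⟩

lemma aux_sum_card (q : ℕ) (hq : 0 < q) :
    ∑ d ∈ q.divisors, Nat.card {ψ : DirichletCharacter ℂ d // ψ.IsPrimitive} = q.totient := by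
  have : NeZero q := ⟨hq.ne'⟩
  have hcard : Nat.card (DirichletCharacter ℂ q) = q.totient :=
    DirichletCharacter.card_eq_totient_of_hasEnoughRootsOfUnity ℂ q
  have hfin : Finite (DirichletCharacter ℂ q) :=
    Nat.finite_of_card_ne_zero (by rw [hcard]; exact (Nat.totient_pos.mpr hq).ne')
  have : Fintype (DirichletCharacter ℂ q) := Fintype.ofFinite _
  classical
  rw [← hcard, Nat.card_eq_fintype_card, ← Finset.card_univ,
    Finset.card_eq_sum_card_fiberwise (f := fun χ => conductor χ) (t := q.divisors)
      (fun χ _ => Nat.mem_divisors.mpr ⟨conductor_dvd_level χ, hq.ne'⟩)]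
  refine Finset.sum_congr rfl fun d hd => ?_
  rw [← aux_card_fiber (Nat.mem_divisors.mp hd).1, Nat.card_eq_fintype_card,
    Fintype.card_subtype]

/-- `∑_{dr = q} μ(d) φ(r)` equals the number of primitive Dirichlet characters mod `q`. -/
theorem stmt_4 (q : ℕ) (hq : 0 < q) :
    (∑ d ∈ q.divisors, (ArithmeticFunction.moebius d) * (Nat.totient (q / d) : ℤ)) =
      Nat.card {χ : DirichletCharacter ℂ q // χ.IsPrimitive} := by
  have key := (ArithmeticFunction.sum_eq_iff_sum_mul_moebius_eq
    (f := fun d => (Nat.card {ψ : DirichletCharacter ℂ d // ψ.IsPrimitive} : ℤ))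
    (g := fun n => (n.totient : ℤ))).mp (fun n hn => by
      exact_mod_cast congrArg (Nat.cast (R := ℤ)) (aux_sum_card n hn)) q hq
  rw [← key, ← Nat.sum_divisorsAntidiagonal (fun d r => (ArithmeticFunction.moebius d : ℤ) * (Nat.totient r : ℤ))]

  simp
end

section
/- Let A and B be finite multisets of complex numbers all of whose elements have real part greater than 0, and let p be a prime. Then ∑_{g=0}^∞ σ_{-A}(p^g)σ_{-B}(p^g)/p^g = ∫₀^1 ∏_{α∈A} (1 - e(θ)/p^{1/2+α})^{-1} ∏_{β∈B} (1 - e(-θ)/p^{1/2+β})^{-1} dθ, where e(θ) = exp(2πiθ). -/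
set_option maxHeartbeats 1000000

open Complex

/-- The generalized divisor function `σ_A(n)` for `A = [s₁,…,s_R]` a list of complex
exponents. -/
noncomputable def dsigma : List ℂ → ℕ → ℂ
  | [], n => if n = 1 then 1 else 0
  | s :: A, n => ∑ d ∈ n.divisors, (d : ℂ) ^ s * dsigma A (n / d)


lemma natpow_cpow (n : ℕ) (s : ℂ) (j : ℕ) : ((n : ℂ) ^ j) ^ s = ((n : ℂ) ^ s) ^ j := by
  induction j with
  | zero => simp
  | succ j ih =>
    have h1 : ((n : ℂ) ^ (j+1)) = ((((n:ℝ)^j : ℝ)) : ℂ) * (((n:ℝ)) : ℂ) := by push_cast; ring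
    rw [h1, Complex.mul_cpow_ofReal_nonneg (by positivity) (by positivity)]
    have h2 : ((((n:ℝ)^j : ℝ)) : ℂ) = (n : ℂ)^j := by push_cast; ring
    have h3 : ((((n:ℝ)) : ℂ)) = (n : ℂ) := by push_cast; ring
    rw [h2, h3, ih, pow_succ]

lemma dsigma_cons_pp {p : ℕ} (hp : p.Prime) (s : ℂ) (L : List ℂ) (g : ℕ) :
    dsigma (s :: L) (p ^ g) =
      ∑ j ∈ Finset.range (g + 1), ((p : ℂ) ^ s) ^ j * dsigma L (p ^ (g - j)) := by
  rw [dsigma, Nat.divisors_prime_pow hp, Finset.sum_map]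
  refine Finset.sum_congr rfl fun j hj => ?_
  rw [Finset.mem_range, Nat.lt_succ] at hj
  simp only [Function.Embedding.coeFn_mk]
  rw [Nat.pow_div hj hp.pos]
  push_cast
  rw [natpow_cpow]


lemma norm_p_cpow {p : ℕ} (hp : p.Prime) (s : ℂ) : ‖(p : ℂ) ^ s‖ = (p : ℝ) ^ s.re := by
  have h0 : (0:ℝ) < (p:ℝ) := by exact_mod_cast hp.pos
  have : ((p : ℕ) : ℂ) = (((p:ℝ)) : ℂ) := by push_cast; ring
  rw [this, Complex.norm_cpow_eq_rpow_re_of_pos h0]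

lemma norm_p_cpow_lt_one {p : ℕ} (hp : p.Prime) {α : ℂ} (hα : 0 < α.re) :
    ‖(p : ℂ) ^ (-α)‖ < 1 := by
  rw [norm_p_cpow hp]
  have h1 : (1:ℝ) < (p:ℝ) := by exact_mod_cast hp.one_lt
  apply Real.rpow_lt_one_of_one_lt_of_neg h1
  simpa using hα

lemma key {p : ℕ} (hp : p.Prime) :
    ∀ (L : List ℂ), (∀ α ∈ L, 0 < α.re) → ∀ y : ℂ, ‖y‖ ≤ 1 →
    Summable (fun g => ‖dsigma (L.map Neg.neg) (p ^ g) * y ^ g‖) ∧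
    ∑' g : ℕ, dsigma (L.map Neg.neg) (p ^ g) * y ^ g =
      (L.map (fun α => (1 - y * (p : ℂ) ^ (-α))⁻¹)).prod := by
  intro L
  induction L with
  | nil =>
    intro _ y _
    have hf : ∀ g : ℕ, dsigma ([] : List ℂ) (p ^ g) * y ^ g = if g = 0 then 1 else 0 := by
      intro g
      rcases eq_or_ne g 0 with rfl | hg
      · simp [dsigma]
      · have : p ^ g ≠ 1 := Nat.one_lt_pow hg hp.one_lt |>.ne'
        simp [dsigma, this, hg, hp.ne_one]
    constructor
    · simp only [List.map_nil]
      apply summable_of_finite_support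
      apply Set.Finite.subset (Set.finite_singleton 0)
      intro g hg
      simp only [Function.mem_support] at hg
      by_contra h
      simp only [Set.mem_singleton_iff] at h
      rw [hf g, if_neg h] at hg
      simp at hg
    · simp only [List.map_nil, List.prod_nil]
      rw [tsum_congr hf]
      exact (hasSum_ite_eq 0 (1:ℂ)).tsum_eq
  | cons α L ih =>
    intro hL y hy
    have hα : 0 < α.re := hL α List.mem_cons_self
    obtain ⟨hb, hbt⟩ := ih (fun β hβ => hL β (List.mem_cons_of_mem α hβ)) y hy
    set r := (p : ℂ) ^ (-α) with hr
    have hyr : ‖y * r‖ < 1 := by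
      calc ‖y * r‖ = ‖y‖ * ‖r‖ := norm_mul _ _
      _ ≤ 1 * ‖r‖ := by gcongr
      _ < 1 := by rw [one_mul]; exact norm_p_cpow_lt_one hp hα
    have ha : Summable (fun j : ℕ => ‖(y * r) ^ j‖) := by
      simpa [norm_pow] using summable_geometric_of_lt_one (norm_nonneg _) hyr
    have hfe : ∀ g : ℕ, dsigma ((α :: L).map Neg.neg) (p ^ g) * y ^ g =
        ∑ kl ∈ Finset.HasAntidiagonal.antidiagonal g, (y * r) ^ kl.1 *
          (dsigma (L.map Neg.neg) (p ^ kl.2) * y ^ kl.2) := by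
      intro g
      rw [Finset.Nat.sum_antidiagonal_eq_sum_range_succ_mk]
      simp only [List.map_cons]
      rw [dsigma_cons_pp hp, Finset.sum_mul]
      refine Finset.sum_congr rfl fun j hj => ?_
      rw [Finset.mem_range, Nat.lt_succ] at hj
      have : y ^ g = y ^ j * y ^ (g - j) := by
        rw [← pow_add, Nat.add_sub_cancel' hj]
      rw [this, mul_pow]
      ring
    constructor
    · have := summable_norm_sum_mul_antidiagonal_of_summable_norm ha hb
      simpa only [← hfe] using this
    · have := tsum_mul_tsum_eq_tsum_sum_antidiagonal_of_summable_norm ha hb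
      calc ∑' g : ℕ, dsigma ((α :: L).map Neg.neg) (p ^ g) * y ^ g
          = ∑' g : ℕ, ∑ kl ∈ Finset.HasAntidiagonal.antidiagonal g, (y * r) ^ kl.1 *
              (dsigma (L.map Neg.neg) (p ^ kl.2) * y ^ kl.2) := by
            exact tsum_congr hfe
        _ = (∑' j : ℕ, (y * r) ^ j) *
              ∑' g : ℕ, dsigma (L.map Neg.neg) (p ^ g) * y ^ g := this.symm
        _ = (1 - y * r)⁻¹ * (L.map (fun β => (1 - y * (p : ℂ) ^ (-β))⁻¹)).prod := by
            rw [tsum_geometric_of_norm_lt_one hyr, hbt]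
        _ = ((α :: L).map (fun β => (1 - y * (p : ℂ) ^ (-β))⁻¹)).prod := by
            rw [List.map_cons, List.prod_cons]


/-- `∑_{g≥0} σ_{-A}(p^g) σ_{-B}(p^g) p^{-g}
  = ∫₀^1 ∏_{α∈A} (1 - e(θ)/p^{1/2+α})⁻¹ ∏_{β∈B} (1 - e(-θ)/p^{1/2+β})⁻¹ dθ`,
for `A`, `B` with entries of positive real part and `p` prime, where `e(θ) = exp(2πiθ)`. -/
theorem stmt_6 (A B : List ℂ) (hA : ∀ α ∈ A, 0 < α.re) (hB : ∀ β ∈ B, 0 < β.re)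
    (p : ℕ) (hp : p.Prime) :
    (∑' g : ℕ, dsigma (A.map Neg.neg) (p ^ g) * dsigma (B.map Neg.neg) (p ^ g) / (p : ℂ) ^ g) =
    ∫ θ in (0:ℝ)..1,
      (A.map (fun α =>
          (1 - Complex.exp (2 * Real.pi * I * θ) / (p : ℂ) ^ ((1 : ℂ) / 2 + α))⁻¹)).prod *
      (B.map (fun β =>
          (1 - Complex.exp (-(2 * Real.pi * I * θ)) / (p : ℂ) ^ ((1 : ℂ) / 2 + β))⁻¹)).prod := by
  have hp0 : (p : ℂ) ≠ 0 := Nat.cast_ne_zero.mpr hp.pos.ne'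
  set q : ℂ := (p : ℂ) ^ (-((1:ℂ)/2)) with hq
  have hqnorm : ‖q‖ ≤ 1 := by
    rw [hq, norm_p_cpow hp]
    apply Real.rpow_le_one_of_one_le_of_nonpos (by exact_mod_cast hp.one_le)
    simp
  -- e θ and its norm
  set e : ℝ → ℂ := fun θ => Complex.exp (2 * Real.pi * I * θ) with he
  set e' : ℝ → ℂ := fun θ => Complex.exp (-(2 * Real.pi * I * θ)) with he'
  have hee : ∀ θ : ℝ, ‖e θ‖ = 1 := by
    intro θ
    rw [he]
    have : (2 * (Real.pi:ℂ) * I * θ) = ((2 * Real.pi * θ : ℝ) : ℂ) * I := by push_cast; ring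
    simp only [this]
    rw [Complex.norm_exp_ofReal_mul_I]
  have hee' : ∀ θ : ℝ, ‖e' θ‖ = 1 := by
    intro θ
    rw [he']
    have : (-(2 * (Real.pi:ℂ) * I * θ)) = ((-(2 * Real.pi * θ) : ℝ) : ℂ) * I := by push_cast; ring
    simp only [this]
    rw [Complex.norm_exp_ofReal_mul_I]
  -- factor equality
  have hfac : ∀ (x : ℂ) (α : ℂ), x * q * (p : ℂ) ^ (-α) = x / (p : ℂ) ^ ((1:ℂ)/2 + α) := by
    intro x α
    rw [div_eq_mul_inv, ← Complex.cpow_neg, neg_add, Complex.cpow_add _ _ hp0, hq]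
    ring
  -- coefficients
  set cA : ℕ → ℂ := fun g => dsigma (A.map Neg.neg) (p ^ g) * q ^ g with hcA
  set cB : ℕ → ℂ := fun g => dsigma (B.map Neg.neg) (p ^ g) * q ^ g with hcB
  have hcAs : Summable (fun g => ‖cA g‖) := (key hp A hA q hqnorm).1
  have hcBs : Summable (fun g => ‖cB g‖) := (key hp B hB q hqnorm).1
  -- the double-indexed family
  set F : ℕ × ℕ → ℝ → ℂ := fun z θ =>
    cA z.1 * cB z.2 * Complex.exp ((((z.1:ℂ) - (z.2:ℂ)) * (2 * Real.pi * I)) * θ) with hF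
  have hFnorm : ∀ z θ, ‖F z θ‖ = ‖cA z.1‖ * ‖cB z.2‖ := by
    intro z θ
    rw [hF]
    simp only
    have : ((((z.1:ℂ) - (z.2:ℂ)) * (2 * Real.pi * I)) * θ)
        = ((((z.1:ℝ) - (z.2:ℝ)) * (2 * Real.pi) * θ : ℝ) : ℂ) * I := by push_cast; ring
    rw [this, norm_mul, norm_mul,
      Complex.norm_exp_ofReal_mul_I, mul_one]
  -- pointwise expansion of the integrand
  have hpt : ∀ θ : ℝ,
      (A.map (fun α => (1 - e θ / (p : ℂ) ^ ((1 : ℂ) / 2 + α))⁻¹)).prod *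
      (B.map (fun β => (1 - e' θ / (p : ℂ) ^ ((1 : ℂ) / 2 + β))⁻¹)).prod
      = ∑' z : ℕ × ℕ, F z θ := by
    intro θ
    have hyA : ‖e θ * q‖ ≤ 1 := by
      rw [norm_mul, hee, one_mul]; exact hqnorm
    have hyB : ‖e' θ * q‖ ≤ 1 := by
      rw [norm_mul, hee', one_mul]; exact hqnorm
    obtain ⟨hsA, htA⟩ := key hp A hA (e θ * q) hyA
    obtain ⟨hsB, htB⟩ := key hp B hB (e' θ * q) hyB
    have hA' : (A.map (fun α => (1 - e θ / (p : ℂ) ^ ((1 : ℂ) / 2 + α))⁻¹)).prod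
        = ∑' g : ℕ, dsigma (A.map Neg.neg) (p ^ g) * (e θ * q) ^ g := by
      rw [htA]
      congr 1
      exact List.map_congr_left fun α _ => by rw [hfac]
    have hB' : (B.map (fun β => (1 - e' θ / (p : ℂ) ^ ((1 : ℂ) / 2 + β))⁻¹)).prod
        = ∑' g : ℕ, dsigma (B.map Neg.neg) (p ^ g) * (e' θ * q) ^ g := by
      rw [htB]
      congr 1
      exact List.map_congr_left fun β _ => by rw [hfac]
    rw [hA', hB', tsum_mul_tsum_of_summable_norm hsA hsB]
    apply tsum_congr
    intro z
    rw [hF]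
    simp only
    rw [mul_pow, mul_pow, hcA, hcB]
    simp only
    have h1 : e θ ^ z.1 = Complex.exp ((z.1 : ℂ) * (2 * Real.pi * I * θ)) := by
      rw [he, ← Complex.exp_nat_mul]
    have h2 : e' θ ^ z.2 = Complex.exp ((z.2 : ℂ) * (-(2 * Real.pi * I * θ))) := by
      rw [he', ← Complex.exp_nat_mul]
    have h3 : Complex.exp ((z.1 : ℂ) * (2 * Real.pi * I * θ)) *
        Complex.exp ((z.2 : ℂ) * (-(2 * Real.pi * I * θ)))
        = Complex.exp ((((z.1:ℂ) - (z.2:ℂ)) * (2 * Real.pi * I)) * θ) := by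
      rw [← Complex.exp_add]; congr 1; ring
    rw [h1, h2, ← h3]
    ring
  -- integrability and integral norms
  have hFcont : ∀ z : ℕ × ℕ, Continuous (F z) := by
    intro z
    apply Continuous.mul continuous_const
    exact Complex.continuous_exp.comp (continuous_const.mul Complex.continuous_ofReal)
  have hFint : ∀ z : ℕ × ℕ, MeasureTheory.IntegrableOn (F z) (Set.Ioc (0:ℝ) 1) := by
    intro z
    exact (hFcont z).integrableOn_Ioc
  have hFnormint : ∀ z : ℕ × ℕ,
      (∫ θ in Set.Ioc (0:ℝ) 1, ‖F z θ‖) = ‖cA z.1‖ * ‖cB z.2‖ := by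
    intro z
    rw [MeasureTheory.setIntegral_congr_fun measurableSet_Ioc
      (g := fun _ => ‖cA z.1‖ * ‖cB z.2‖) (fun θ _ => hFnorm z θ),
      MeasureTheory.setIntegral_const]
    simp [Real.volume_Ioc]
  have hFsum : Summable (fun z : ℕ × ℕ => ∫ θ in Set.Ioc (0:ℝ) 1, ‖F z θ‖) := by
    exact (hcAs.mul_of_nonneg hcBs (fun g => norm_nonneg _)
      (fun g => norm_nonneg _)).congr (fun z => (hFnormint z).symm)
  -- each integral
  have hFval : ∀ z : ℕ × ℕ, (∫ θ in Set.Ioc (0:ℝ) 1, F z θ)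
      = cA z.1 * cB z.2 * (if z.1 = z.2 then 1 else 0) := by
    intro z
    rw [← intervalIntegral.integral_of_le zero_le_one]
    rcases eq_or_ne z.1 z.2 with hz | hz
    · have hFe : ∀ θ : ℝ, F z θ = cA z.1 * cB z.2 := by
        intro θ
        simp only [hF, hz, sub_self, zero_mul, Complex.exp_zero, mul_one]
      rw [intervalIntegral.integral_congr (g := fun _ => cA z.1 * cB z.2)
        (fun θ _ => hFe θ), intervalIntegral.integral_const, if_pos hz]
      simp
    · have hn : ((z.1:ℂ) - (z.2:ℂ)) ≠ 0 := by
        intro h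
        apply hz
        exact_mod_cast sub_eq_zero.mp h
      have hc : (((z.1:ℂ) - (z.2:ℂ)) * (2 * Real.pi * I)) ≠ 0 := by
        apply mul_ne_zero hn
        simp [Real.pi_ne_zero, Complex.I_ne_zero]
      rw [if_neg hz, mul_zero, hF]
      simp only
      rw [intervalIntegral.integral_const_mul, integral_exp_mul_complex hc]
      have : Complex.exp ((((z.1:ℂ) - (z.2:ℂ)) * (2 * Real.pi * I)) * (1:ℝ)) = 1 := by
        have hZ : (((z.1:ℂ) - (z.2:ℂ)) * (2 * Real.pi * I)) * (1:ℝ)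
            = ((z.1 - z.2 : ℤ) : ℂ) * (2 * Real.pi * I) := by push_cast; ring
        rw [hZ, Complex.exp_int_mul_two_pi_mul_I]
      rw [this]
      simp
  -- swap integral and sum
  have hswap : (∫ θ in Set.Ioc (0:ℝ) 1, ∑' z : ℕ × ℕ, F z θ)
      = ∑' z : ℕ × ℕ, ∫ θ in Set.Ioc (0:ℝ) 1, F z θ :=
    (MeasureTheory.integral_tsum_of_summable_integral_norm hFint hFsum).symm
  -- diagonal
  have hdiag : (∑' z : ℕ × ℕ, cA z.1 * cB z.2 * (if z.1 = z.2 then 1 else 0))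
      = ∑' g : ℕ, cA g * cB g := by
    apply tsum_eq_tsum_of_ne_zero_bij (fun n => ((n : ℕ), (n : ℕ)))
    · intro m n h
      exact Subtype.ext (by simpa using congrArg Prod.fst h)
    · intro z hz
      simp only [Function.mem_support] at hz
      have hz12 : z.1 = z.2 := by
        by_contra h
        rw [if_neg h, mul_zero] at hz
        exact hz rfl
      have : cA z.1 * cB z.1 ≠ 0 := by
        rw [hz12] at hz ⊢
        simpa using hz
      exact ⟨⟨z.1, this⟩, by simp [Prod.ext_iff, hz12]⟩
    · intro n
      simp
  -- LHS rewriting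
  have hlhs : (∑' g : ℕ, dsigma (A.map Neg.neg) (p ^ g) * dsigma (B.map Neg.neg) (p ^ g)
      / (p : ℂ) ^ g) = ∑' g : ℕ, cA g * cB g := by
    apply tsum_congr
    intro g
    rw [hcA, hcB]
    simp only
    have hqq : q * q = ((p:ℂ))⁻¹ := by
      rw [hq, ← Complex.cpow_add _ _ hp0]
      have h12 : (-((1:ℂ)/2)) + (-((1:ℂ)/2)) = -1 := by norm_num
      rw [h12, Complex.cpow_neg_one]
    have hqg : q ^ g * q ^ g = ((p:ℂ)^g)⁻¹ := by
      rw [← mul_pow, hqq, inv_pow]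
    rw [div_eq_mul_inv, ← hqg]
    ring
  -- put together
  rw [hlhs, intervalIntegral.integral_of_le zero_le_one]
  calc ∑' g : ℕ, cA g * cB g
      = ∑' z : ℕ × ℕ, cA z.1 * cB z.2 * (if z.1 = z.2 then 1 else 0) := hdiag.symm
    _ = ∑' z : ℕ × ℕ, ∫ θ in Set.Ioc (0:ℝ) 1, F z θ := by
        exact tsum_congr fun z => (hFval z).symm
    _ = ∫ θ in Set.Ioc (0:ℝ) 1, ∑' z : ℕ × ℕ, F z θ := hswap.symm
    _ = _ := by
        apply MeasureTheory.setIntegral_congr_fun measurableSet_Ioc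
        intro θ _
        exact (hpt θ).symm
end

section
/- Suppose C(X) = ∑ c_n X^n = ∏_{j=1}^J (1-γ_j X)^{-1} and D(X) = ∑ d_n X^n = ∏_{k=1}^K (1-δ_k X)^{-1} as formal power series (or convergent series for small X), and let E(X) = ∑_g c_g d_g X^g. Define C̃(X) = C(X)(1-γ₁X)/(1-X/δ₁), D̃(X) = D(X)(1-δ₁X)/(1-X/γ₁), with coefficients c̃_n, d̃_n, and Ẽ(X) = ∑_g c̃_g d̃_g X^g. Further set E_c(X) = ∑_{g,m≥0} c_{g+m} d_g X^{g+m} γ₁^{-m} and E_d(X) = ∑_{g,n≥0} c_g d_{g+n} X^{g+n} δ₁^{-n}. Then Ẽ(X)·(1 - X/(γ₁δ₁)) = (1-X)(1-γ₁δ₁)(E_c(X)+E_d(X)) + (-1 + (2-X)γ₁δ₁)·E(X). -/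
open PowerSeries

/-- `∏_j (1 - γ_j X)⁻¹` as a formal power series. -/
noncomputable def geomProd {n : ℕ} (γ : Fin n → ℂ) : PowerSeries ℂ :=
  ∏ j, (1 - PowerSeries.C (γ j) * X)⁻¹

/-- Hadamard (diagonal) product of two power series. -/
noncomputable def hadamard (F G : PowerSeries ℂ) : PowerSeries ℂ :=
  PowerSeries.mk fun n => coeff n F * coeff n G

lemma one_sub_mul_inv (u : ℂ) :
    (1 - PowerSeries.C u * X) * (1 - PowerSeries.C u * X)⁻¹ = 1 :=
  PowerSeries.mul_inv_cancel _ (by simp)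

lemma inv_one_sub_mul (u : ℂ) :
    (1 - PowerSeries.C u * X)⁻¹ * (1 - PowerSeries.C u * X) = 1 := by
  rw [mul_comm]; exact one_sub_mul_inv u

lemma inv_geom_eq_mk (u : ℂ) :
    (1 - PowerSeries.C u * X)⁻¹ = PowerSeries.mk fun n => u ^ n := by
  have h : (1 - PowerSeries.C u * X) * (PowerSeries.mk fun n => u ^ n) = 1 := by
    ext n
    rw [sub_mul, one_mul, mul_assoc, map_sub, PowerSeries.coeff_C_mul]
    cases n with
    | zero => simp
    | succ m =>
      rw [PowerSeries.coeff_succ_X_mul]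
      simp [pow_succ, mul_comm, PowerSeries.coeff_one]
  calc (1 - PowerSeries.C u * X)⁻¹
      = (1 - PowerSeries.C u * X)⁻¹ * ((1 - PowerSeries.C u * X) *
          (PowerSeries.mk fun n => u ^ n)) := by rw [h, mul_one]
    _ = ((1 - PowerSeries.C u * X) * (1 - PowerSeries.C u * X)⁻¹) *
          (PowerSeries.mk fun n => u ^ n) := by ring
    _ = PowerSeries.mk fun n => u ^ n := by rw [one_sub_mul_inv, one_mul]

lemma coeff_mul_geomInv (F : PowerSeries ℂ) (u : ℂ) (n : ℕ) :
    coeff n (F * (1 - PowerSeries.C u * X)⁻¹) =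
      ∑ g ∈ Finset.range (n + 1), coeff g F * u ^ (n - g) := by
  rw [inv_geom_eq_mk, PowerSeries.coeff_mul,
    Finset.Nat.sum_antidiagonal_eq_sum_range_succ
      (fun a b => coeff a F * coeff b (PowerSeries.mk fun n => u ^ n))]
  simp

lemma coeff_hadamard (F G : PowerSeries ℂ) (n : ℕ) :
    coeff n (hadamard F G) = coeff n F * coeff n G := by
  simp [hadamard]

lemma coeff_mul_one_sub (F : PowerSeries ℂ) (u : ℂ) (n : ℕ) :
    coeff n (F * (1 - PowerSeries.C u * X)) =
      coeff n F - u * coeff n (X * F) := by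
  have h : F * (1 - PowerSeries.C u * X) = F - PowerSeries.C u * (X * F) := by ring
  rw [h, map_sub, PowerSeries.coeff_C_mul]

lemma X_mul_hadamard (F G : PowerSeries ℂ) :
    hadamard (X * F) (X * G) = X * hadamard F G := by
  ext n
  cases n with
  | zero =>
    simp [coeff_hadamard, PowerSeries.coeff_zero_eq_constantCoeff, map_mul]
  | succ m =>
    rw [coeff_hadamard, PowerSeries.coeff_succ_X_mul, PowerSeries.coeff_succ_X_mul,
      PowerSeries.coeff_succ_X_mul, coeff_hadamard]

lemma hadamard_expand (F G : PowerSeries ℂ) (u v : ℂ) :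
    hadamard (F * (1 - PowerSeries.C u * X)) (G * (1 - PowerSeries.C v * X)) =
      hadamard F G - PowerSeries.C u * hadamard (X * F) G -
        PowerSeries.C v * hadamard F (X * G) +
        PowerSeries.C u * PowerSeries.C v * hadamard (X * F) (X * G) := by
  ext n
  simp only [map_sub, map_add, mul_assoc, PowerSeries.coeff_C_mul, coeff_hadamard,
    coeff_mul_one_sub]
  ring

lemma hadamard_expand_left (F G : PowerSeries ℂ) (u : ℂ) :
    hadamard (F * (1 - PowerSeries.C u * X)) G =
      hadamard F G - PowerSeries.C u * hadamard (X * F) G := by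
  ext n
  simp only [map_sub, PowerSeries.coeff_C_mul, coeff_hadamard, coeff_mul_one_sub]
  ring

lemma key_s9 (T S : PowerSeries ℂ) (a b : ℂ) (ha : a ≠ 0) (hb : b ≠ 0) :
    hadamard (T * (1 - PowerSeries.C a * X)) (S * (1 - PowerSeries.C b * X)) *
        (1 - PowerSeries.C (a * b)⁻¹ * X) =
      (1 - X) * PowerSeries.C (1 - a * b) *
          (hadamard (T * (1 - PowerSeries.C b⁻¹ * X)) S +
            hadamard (S * (1 - PowerSeries.C a⁻¹ * X)) T) +
        (-1 + (2 - X) * PowerSeries.C (a * b)) *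
          hadamard (T * (1 - PowerSeries.C b⁻¹ * X)) (S * (1 - PowerSeries.C a⁻¹ * X)) := by
  have hcomm : hadamard (S * (1 - PowerSeries.C a⁻¹ * X)) T =
      hadamard T S - PowerSeries.C a⁻¹ * hadamard T (X * S) := by
    rw [hadamard_expand_left]
    congr 1
    · ext n; simp [coeff_hadamard, mul_comm]
    · congr 1; ext n; simp [coeff_hadamard, mul_comm]
  rw [hadamard_expand, hadamard_expand, hadamard_expand_left, hcomm, X_mul_hadamard]
  have hC : PowerSeries.C (1 - a * b) = 1 - PowerSeries.C a * PowerSeries.C b := by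
    rw [map_sub, map_one, map_mul]
  have hCab : PowerSeries.C (a * b) = PowerSeries.C a * PowerSeries.C b := map_mul _ _ _
  have hCabi : PowerSeries.C (a * b)⁻¹ = PowerSeries.C a⁻¹ * PowerSeries.C b⁻¹ := by
    rw [mul_inv, map_mul]
  rw [hC, hCab, hCabi]
  have hA : PowerSeries.C a * PowerSeries.C a⁻¹ = 1 := by
    rw [← map_mul, mul_inv_cancel₀ ha, map_one]
  have hB : PowerSeries.C b * PowerSeries.C b⁻¹ = 1 := by
    rw [← map_mul, mul_inv_cancel₀ hb, map_one]
  set P := hadamard T S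
  set Q := hadamard (X * T) S
  set R := hadamard T (X * S)
  linear_combination
    (PowerSeries.C b⁻¹ * X * Q + PowerSeries.C b * R -
      2 * PowerSeries.C b * PowerSeries.C b⁻¹ * X * P) * hA +
    (PowerSeries.C a * Q + PowerSeries.C a⁻¹ * X * R - 2 * X * P) * hB

/-- The identity
`Ẽ(X)(1 - X/(γ₁δ₁)) = (1-X)(1-γ₁δ₁)(E_c + E_d) + (-1 + (2-X)γ₁δ₁) E`,
where `C = ∏(1-γ_jX)⁻¹`, `D = ∏(1-δ_kX)⁻¹`, `E` is their Hadamard product, `C̃, D̃`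
arise from `C, D` by replacing `γ₁ ↦ 1/δ₁`, `δ₁ ↦ 1/γ₁`, `Ẽ` is the Hadamard product of
`C̃, D̃`, and `E_c(X) = ∑_{g,m} c_{g+m} d_g X^{g+m} γ₁^{-m}`,
`E_d(X) = ∑_{g,n} c_g d_{g+n} X^{g+n} δ₁^{-n}`; stated as formal power series. -/
theorem stmt_9 (J K : ℕ) (γ : Fin (J + 1) → ℂ) (δ : Fin (K + 1) → ℂ)
    (hγ : ∀ j, γ j ≠ 0) (hδ : ∀ k, δ k ≠ 0) :
    hadamard
        (geomProd γ * (1 - PowerSeries.C (γ 0) * X) * (1 - PowerSeries.C (δ 0)⁻¹ * X)⁻¹)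
        (geomProd δ * (1 - PowerSeries.C (δ 0) * X) * (1 - PowerSeries.C (γ 0)⁻¹ * X)⁻¹) *
      (1 - PowerSeries.C (γ 0 * δ 0)⁻¹ * X) =
    (1 - X) * PowerSeries.C (1 - γ 0 * δ 0) *
        (PowerSeries.mk (fun n => coeff n (geomProd γ) *
            ∑ g ∈ Finset.range (n + 1), coeff g (geomProd δ) * (γ 0)⁻¹ ^ (n - g)) +
          PowerSeries.mk (fun n => coeff n (geomProd δ) *
            ∑ g ∈ Finset.range (n + 1), coeff g (geomProd γ) * (δ 0)⁻¹ ^ (n - g))) +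
      (-1 + (2 - X) * PowerSeries.C (γ 0 * δ 0)) * hadamard (geomProd γ) (geomProd δ) := by
  set a := γ 0 with ha_def
  set b := δ 0 with hb_def
  have ha : a ≠ 0 := hγ 0
  have hb : b ≠ 0 := hδ 0
  set Cs := geomProd γ with hCs
  set Ds := geomProd δ with hDs
  set T := Cs * (1 - PowerSeries.C b⁻¹ * X)⁻¹ with hT_def
  set S := Ds * (1 - PowerSeries.C a⁻¹ * X)⁻¹ with hS_def
  have hT : Cs = T * (1 - PowerSeries.C b⁻¹ * X) := by
    rw [hT_def, mul_assoc, inv_one_sub_mul, mul_one]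
  have hS : Ds = S * (1 - PowerSeries.C a⁻¹ * X) := by
    rw [hS_def, mul_assoc, inv_one_sub_mul, mul_one]
  have harg1 : Cs * (1 - PowerSeries.C a * X) * (1 - PowerSeries.C b⁻¹ * X)⁻¹ =
      T * (1 - PowerSeries.C a * X) := by
    rw [hT_def]; ring
  have harg2 : Ds * (1 - PowerSeries.C b * X) * (1 - PowerSeries.C a⁻¹ * X)⁻¹ =
      S * (1 - PowerSeries.C b * X) := by
    rw [hS_def]; ring
  have hEc : (PowerSeries.mk fun n => coeff n Cs *
      ∑ g ∈ Finset.range (n + 1), coeff g Ds * a⁻¹ ^ (n - g)) =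
      hadamard (T * (1 - PowerSeries.C b⁻¹ * X)) S := by
    rw [← hT]
    ext n
    rw [coeff_hadamard, PowerSeries.coeff_mk, hS_def, coeff_mul_geomInv]
  have hEd : (PowerSeries.mk fun n => coeff n Ds *
      ∑ g ∈ Finset.range (n + 1), coeff g Cs * b⁻¹ ^ (n - g)) =
      hadamard (S * (1 - PowerSeries.C a⁻¹ * X)) T := by
    rw [← hS]
    ext n
    rw [coeff_hadamard, PowerSeries.coeff_mk, hT_def, coeff_mul_geomInv]
  have hE : hadamard Cs Ds =
      hadamard (T * (1 - PowerSeries.C b⁻¹ * X)) (S * (1 - PowerSeries.C a⁻¹ * X)) := by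
    rw [← hT, ← hS]
  rw [harg1, harg2, hEc, hEd, hE]
  exact key_s9 T S a b ha hb
end
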